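/- arXiv:1002.4130 — 3 statements merged into one kernel-verified Lean document; each statement's English description precedes it below -/
import Mathlib

section
/- Let H be an atomic monoid and a ∈ H with at least two R-equivalence classes of factorizations (|R_a| ≥ 2). Then c(a) ≥ μ(a), where μ(a) = sup over R-classes ρ of Z(a) of min{|z| : z ∈ ρ}. -/
open Multiset
open scoped Classical ENNReal

/-- The set of atoms (irreducible elements) of a reduced monoid `M`. -/
abbrev Atom (M : Type) [CancelCommMonoid M] : Type := {u : M // Irreducible u}

/-- The factorization homomorphism `π : Z(H) → H`, where the factorization monoid
`Z(H)` is realized as the free commutative monoid (multiset) over the atoms. -/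
def fprod {M : Type} [CancelCommMonoid M] (z : Multiset (Atom M)) : M :=
  (z.map Subtype.val).prod

/-- The set of factorizations `Z(a)` of `a`. -/
def Zf {M : Type} [CancelCommMonoid M] (a : M) : Set (Multiset (Atom M)) :=
  {z | fprod z = a}

/-- `M` is reduced: the only unit is `1`. -/
def Reduced (M : Type) [CancelCommMonoid M] : Prop := ∀ u : M, IsUnit u → u = 1

/-- `M` is atomic: every non-unit is a product of atoms. -/
def Atomic (M : Type) [CancelCommMonoid M] : Prop :=
  ∀ a : M, ¬ IsUnit a → ∃ z : Multiset (Atom M), fprod z = a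

/-- The distance between two factorizations. -/
noncomputable def fdist {M : Type} [CancelCommMonoid M] (z z' : Multiset (Atom M)) : ℕ :=
  max (card (z - z')) (card (z' - z))

/-- The catenary degree `c(a)`: the least `N` such that any two factorizations of `a`
can be concatenated by an `N`-chain of factorizations of `a`. -/
noncomputable def cat {M : Type} [CancelCommMonoid M] (a : M) : ℕ∞ :=
  sInf {N : ℕ∞ | ∀ z ∈ Zf a, ∀ z' ∈ Zf a,
    Relation.ReflTransGen (fun u v => v ∈ Zf a ∧ (fdist u v : ℕ∞) ≤ N) z z'}

/-- The catenary degree `c(H)`. -/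
noncomputable def catH (M : Type) [CancelCommMonoid M] : ℕ∞ := ⨆ a : M, cat a

/-- The `R`-relation on factorizations of `a`: two factorizations are `R`-related if
they can be joined by a chain of factorizations of `a` whose consecutive members have a
common atom (the degenerate case `z = z' = 1` is the reflexivity case). -/
def RRel {M : Type} [CancelCommMonoid M] (a : M) :
    Multiset (Atom M) → Multiset (Atom M) → Prop :=
  Relation.ReflTransGen (fun u v => u ∈ Zf a ∧ v ∈ Zf a ∧ u ∩ v ≠ 0)

/-- `|R_a| ≥ 2`: `a` has at least two `R`-equivalence classes of factorizations. -/
def TwoClasses {M : Type} [CancelCommMonoid M] (a : M) : Prop :=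
  ∃ z ∈ Zf a, ∃ z' ∈ Zf a, ¬ RRel a z z'

/-- `μ(a)`: the supremum over the `R`-classes `ρ` of `Z(a)` of `min {|z| : z ∈ ρ}`. -/
noncomputable def mu {M : Type} [CancelCommMonoid M] (a : M) : ℕ∞ :=
  ⨆ z ∈ Zf a, ⨅ w ∈ {w | w ∈ Zf a ∧ RRel a z w}, (card w : ℕ∞)

/-- `μ(H) = sup {μ(a) : a ∈ H, |R_a| ≥ 2}`. -/
noncomputable def muH (M : Type) [CancelCommMonoid M] : ℕ∞ :=
  ⨆ a : M, ⨆ (_ : TwoClasses a), mu a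

/-- The monoid of relations `M_H ⊆ Z(H) × Z(H)`. -/
def MHset (M : Type) [CancelCommMonoid M] :
    Set (Multiset (Atom M) × Multiset (Atom M)) :=
  {p | fprod p.1 = fprod p.2}

/-- Atoms of the (reduced) monoid of relations `M_H`. -/
def IsRelAtom {M : Type} [CancelCommMonoid M]
    (p : Multiset (Atom M) × Multiset (Atom M)) : Prop :=
  p ∈ MHset M ∧ p ≠ 0 ∧
    ∀ q r, q ∈ MHset M → r ∈ MHset M → p = q + r → q = 0 ∨ r = 0

lemma RRel_symm {M : Type} [CancelCommMonoid M] (a : M) :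
    Symmetric (RRel a) :=
  haveI : Std.Symm (fun u v : Multiset (Atom M) => u ∈ Zf a ∧ v ∈ Zf a ∧ u ∩ v ≠ 0) :=
    ⟨fun u v ⟨h1, h2, h3⟩ => ⟨h2, h1, by rwa [Multiset.inter_comm]⟩⟩
  fun x y h => Relation.ReflTransGen.stdSymm.symm x y h

lemma mem_Zf_of_chain {M : Type} [CancelCommMonoid M] {a : M}
    {r : Multiset (Atom M) → Multiset (Atom M) → Prop}
    (hr : ∀ u v, r u v → v ∈ Zf a) {z b : Multiset (Atom M)}
    (hz : z ∈ Zf a) (h : Relation.ReflTransGen r z b) : b ∈ Zf a := by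
  rcases h.cases_tail with h | ⟨c, _, hcb⟩
  · exact h ▸ hz
  · exact hr _ _ hcb

lemma crossing {M : Type} [CancelCommMonoid M] (a : M)
    (r : Multiset (Atom M) → Multiset (Atom M) → Prop)
    (hr : ∀ u v, r u v → v ∈ Zf a) (z : Multiset (Atom M)) (hz : z ∈ Zf a)
    (z' : Multiset (Atom M)) (h : Relation.ReflTransGen r z z') (hn : ¬ RRel a z z') :
    ∃ u v, r u v ∧ u ∈ Zf a ∧ RRel a z u ∧ ¬ RRel a z v := by
  induction h with
  | refl => exact absurd Relation.ReflTransGen.refl hn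
  | @tail b c hzb hbc ih =>
    by_cases hb : RRel a z b
    · exact ⟨b, c, hbc, mem_Zf_of_chain hr hz hzb, hb, hn⟩
    · exact ih hb

lemma sub_eq_self_of_inter_eq_zero {α : Type*} [DecidableEq α] {u v : Multiset α}
    (h : u ∩ v = 0) : u - v = u := by
  ext x
  have := congrArg (Multiset.count x) h
  simp only [Multiset.count_inter, Multiset.count_zero] at this
  rw [Multiset.count_sub]
  omega

/-- **Proposition 3.4.** Let `H` be an atomic monoid and `a ∈ H` with `|R_a| ≥ 2`.
Then `c(a) ≥ μ(a)`. -/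
theorem cat_ge_mu (M : Type) [CancelCommMonoid M]
    (hred : Reduced M) (hat : Atomic M)
    (a : M) (h2 : TwoClasses a) :
    mu a ≤ cat a := by
  rw [mu, cat]
  apply iSup₂_le
  intro z hz
  apply le_sInf
  intro N hN
  -- pick z' not R-related to z
  obtain ⟨z1, h1, z1', h1', hn⟩ := h2
  obtain ⟨z', hz', hnz⟩ : ∃ z' ∈ Zf a, ¬ RRel a z z' := by
    by_cases h : RRel a z z1
    · exact ⟨z1', h1', fun h' => hn (((RRel_symm a) h).trans h')⟩
    · exact ⟨z1, h1, h⟩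
  have hchain := hN z hz z' hz'
  obtain ⟨u, v, ⟨hvZ, hdist⟩, huZ, hRu, hnv⟩ :=
    crossing a _ (fun u v h => h.1) z hz z' hchain hnz
  have hiv : u ∩ v = 0 := by
    by_contra h
    exact hnv (hRu.tail ⟨huZ, hvZ, h⟩)
  refine le_trans (iInf₂_le u ⟨huZ, hRu⟩) (le_trans ?_ hdist)
  have : card u ≤ fdist u v := by
    rw [fdist, sub_eq_self_of_inter_eq_zero hiv]
    exact le_max_left _ _
  exact_mod_cast this
end

section
/- Let H be an atomic monoid, P the set of primes of H_red, and T = A(H_red) \ P. The homomorphism φ : M_H → F(P) × F(T) × F(T) given by φ((qx, qy)) = (q, x, y), for q ∈ F(P) and x, y ∈ F(T), is a divisor theory. In particular, M_H is a Krull monoid. -/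
open Multiset
open scoped Classical ENNReal

/-- An atom of (the reduced monoid) `M` which is a prime element. -/
def IsPrimeAtom {M : Type} [CancelCommMonoid M] (u : Atom M) : Prop :=
  ∀ a b : M, u.1 ∣ a * b → u.1 ∣ a ∨ u.1 ∣ b

/-- Extract from a factorization the sub-multiset of its atoms satisfying `pr`,
as a multiset over the subtype `{u // pr u}` (component in a free monoid). -/
noncomputable def part {M : Type} [CancelCommMonoid M] (pr : Atom M → Prop)
    (z : Multiset (Atom M)) : Multiset {u : Atom M // pr u} :=
  (z.filter pr).attach.map fun u => ⟨u.1, (Multiset.mem_filter.mp u.2).2⟩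

/-- `φ : M_H → F(P) × F(T) × F(T)`, `φ((qx, qy)) = (q, x, y)` where `q` is the prime
part and `x, y` the non-prime parts of the two factorizations. -/
noncomputable def phi {M : Type} [CancelCommMonoid M]
    (p : Multiset (Atom M) × Multiset (Atom M)) :
    Multiset {u : Atom M // IsPrimeAtom u} × Multiset {u : Atom M // ¬ IsPrimeAtom u} ×
      Multiset {u : Atom M // ¬ IsPrimeAtom u} :=
  (part IsPrimeAtom p.1, part (fun u => ¬ IsPrimeAtom u) p.1,
    part (fun u => ¬ IsPrimeAtom u) p.2)

/-- The basis elements (prime divisors) of the free monoid `F(P) × F(T) × F(T)`. -/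
def IsBasisEl {M : Type} [CancelCommMonoid M]
    (e : Multiset {u : Atom M // IsPrimeAtom u} × Multiset {u : Atom M // ¬ IsPrimeAtom u} ×
      Multiset {u : Atom M // ¬ IsPrimeAtom u}) : Prop :=
  (∃ p, e = ({p}, 0, 0)) ∨ (∃ t, e = (0, {t}, 0)) ∨ (∃ t, e = (0, 0, {t}))

section Aux

variable {M : Type} [CancelCommMonoid M]

lemma fprod_add (z w : Multiset (Atom M)) : fprod (z + w) = fprod z * fprod w := by
  simp [fprod]

lemma fprod_cons (a : Atom M) (z : Multiset (Atom M)) :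
    fprod (a ::ₘ z) = a.1 * fprod z := by
  simp [fprod]

lemma fprod_singleton (a : Atom M) : fprod ({a} : Multiset (Atom M)) = a.1 := by
  simp [fprod]

lemma dvd_fprod_of_mem {u : Atom M} {z : Multiset (Atom M)} (h : u ∈ z) :
    u.1 ∣ fprod z := by
  exact Multiset.dvd_prod (Multiset.mem_map.2 ⟨u, h, rfl⟩)

lemma part_map_val (pr : Atom M → Prop) (z : Multiset (Atom M)) :
    (part pr z).map Subtype.val = z.filter pr := by
  simp only [part, Multiset.map_map, Function.comp]
  exact Multiset.attach_map_val _

lemma map_val_inj (pr : Atom M → Prop) :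
    Function.Injective (Multiset.map (Subtype.val : {u : Atom M // pr u} → Atom M)) :=
  Multiset.map_injective Subtype.val_injective

lemma part_add (pr : Atom M → Prop) (z w : Multiset (Atom M)) :
    part pr (z + w) = part pr z + part pr w := by
  apply map_val_inj pr
  simp [part_map_val, Multiset.filter_add]

lemma part_le_part_iff (pr : Atom M → Prop) {z w : Multiset (Atom M)} :
    part pr z ≤ part pr w ↔ z.filter pr ≤ w.filter pr := by
  rw [← Multiset.map_le_map_iff Subtype.val_injective, part_map_val, part_map_val]

lemma mem_part_iff (pr : Atom M → Prop) (t : {u : Atom M // pr u}) (z : Multiset (Atom M)) :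
    t ∈ part pr z ↔ t.1 ∈ z := by
  rw [← Multiset.mem_map_of_injective (Subtype.val_injective
    (p := fun u : Atom M => pr u)), part_map_val, Multiset.mem_filter]
  exact ⟨fun h => h.1, fun h => ⟨h, t.2⟩⟩

lemma part_singleton_pos {pr : Atom M → Prop} {u : Atom M} (h : pr u) :
    part pr ({u} : Multiset (Atom M)) = {(⟨u, h⟩ : {v : Atom M // pr v})} := by
  apply map_val_inj pr
  rw [part_map_val]
  simp [Multiset.filter_singleton, h]

lemma part_singleton_neg {pr : Atom M → Prop} {u : Atom M} (h : ¬ pr u) :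
    part pr ({u} : Multiset (Atom M)) = 0 := by
  apply map_val_inj pr
  rw [part_map_val]
  simp [Multiset.filter_singleton, h]

lemma mem_of_prime_dvd (hred : Reduced M) {u : Atom M} (hp : IsPrimeAtom u)
    {z : Multiset (Atom M)} (h : u.1 ∣ fprod z) : u ∈ z := by
  induction z using Multiset.induction with
  | empty =>
    exfalso
    exact u.2.not_isUnit (isUnit_of_dvd_one (by simpa [fprod] using h))
  | cons a w ih =>
    rw [fprod_cons] at h
    rcases hp a.1 (fprod w) h with h1 | h2
    · obtain ⟨c, hc⟩ := h1
      rcases a.2.isUnit_or_isUnit hc with hu | hu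
      · exact absurd hu u.2.not_isUnit
      · have : c = 1 := hred c hu
        have : a = u := Subtype.ext (by rw [hc, this, mul_one])
        simp [this]
    · exact Multiset.mem_cons_of_mem (ih h2)

lemma prime_count_le (hred : Reduced M) {u : Atom M} (hp : IsPrimeAtom u) :
    ∀ n (z z' : Multiset (Atom M)), z.count u ≤ n → fprod z = fprod z' →
      z.count u ≤ z'.count u := by
  intro n
  induction n with
  | zero => intro z z' h _; omega
  | succ n ih =>
    intro z z' hc heq
    by_cases hz : u ∈ z
    · have hz' : u ∈ z' := mem_of_prime_dvd hred hp (heq ▸ dvd_fprod_of_mem hz)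
      have e1 : fprod z = u.1 * fprod (z.erase u) := by
        conv_lhs => rw [← Multiset.cons_erase hz]
        rw [fprod_cons]
      have e2 : fprod z' = u.1 * fprod (z'.erase u) := by
        conv_lhs => rw [← Multiset.cons_erase hz']
        rw [fprod_cons]
      have heq' : fprod (z.erase u) = fprod (z'.erase u) :=
        mul_left_cancel (e1 ▸ e2 ▸ heq)
      have h1 : (z.erase u).count u = z.count u - 1 := Multiset.count_erase_self u z
      have h2 : (z'.erase u).count u = z'.count u - 1 := Multiset.count_erase_self u z'
      have hcz : 1 ≤ z.count u := Multiset.one_le_count_iff_mem.2 hz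
      have hcz' : 1 ≤ z'.count u := Multiset.one_le_count_iff_mem.2 hz'
      have := ih (z.erase u) (z'.erase u) (by omega) heq'
      omega
    · simp [Multiset.count_eq_zero_of_notMem hz]

lemma prime_count (hred : Reduced M) {u : Atom M} (hp : IsPrimeAtom u)
    {z z' : Multiset (Atom M)} (heq : fprod z = fprod z') :
    z.count u = z'.count u :=
  le_antisymm (prime_count_le hred hp _ z z' le_rfl heq)
    (prime_count_le hred hp _ z' z le_rfl heq.symm)

lemma filter_prime_eq (hred : Reduced M) {z z' : Multiset (Atom M)}
    (heq : fprod z = fprod z') :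
    z.filter IsPrimeAtom = z'.filter IsPrimeAtom := by
  ext a
  rw [Multiset.count_filter, Multiset.count_filter]
  by_cases h : IsPrimeAtom a
  · simp [h, prime_count hred h heq]
  · simp [h]

lemma count_le_of_filter_le {pr : Atom M → Prop} {inst : DecidablePred pr}
    {z w : Multiset (Atom M)}
    (h : @Multiset.filter _ pr inst z ≤ @Multiset.filter _ pr inst w)
    {u : Atom M} (hu : pr u) : z.count u ≤ w.count u := by
  letI := inst
  have := Multiset.le_iff_count.1 h u
  rwa [Multiset.count_filter, if_pos hu, Multiset.count_filter, if_pos hu] at this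

lemma le_of_counts_le {z w : Multiset (Atom M)}
    (h1 : ∀ u : Atom M, IsPrimeAtom u → z.count u ≤ w.count u)
    (h2 : ∀ u : Atom M, ¬ IsPrimeAtom u → z.count u ≤ w.count u) :
    z ≤ w := by
  rw [Multiset.le_iff_count]
  intro u
  by_cases hu : IsPrimeAtom u
  · exact h1 u hu
  · exact h2 u hu

lemma exists_witness (hred : Reduced M) (hat : Atomic M) (t : Atom M)
    (ht : ¬ IsPrimeAtom t) :
    ∃ zc zab : Multiset (Atom M), fprod (t ::ₘ zc) = fprod zab ∧ t ∉ zab := by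
  rw [IsPrimeAtom] at ht
  push_neg at ht
  obtain ⟨a, b, hab, hna, hnb⟩ := ht
  have hua : ¬ IsUnit a := by
    intro hu; exact hnb (by rw [hred a hu, one_mul] at hab; exact hab)
  have hub : ¬ IsUnit b := by
    intro hu; exact hna (by rw [hred b hu, mul_one] at hab; exact hab)
  obtain ⟨za, hza⟩ := hat a hua
  obtain ⟨zb, hzb⟩ := hat b hub
  obtain ⟨c, hc⟩ := hab
  have huc : ¬ IsUnit c := by
    intro hu
    rw [hred c hu, mul_one] at hc
    rcases t.2.isUnit_or_isUnit hc.symm with h | h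
    · exact hua h
    · exact hub h
  obtain ⟨zc, hzc⟩ := hat c huc
  refine ⟨zc, za + zb, ?_, ?_⟩
  · rw [fprod_cons, hzc, ← hc, fprod_add, hza, hzb]
  · intro hmem
    rcases Multiset.mem_add.1 hmem with h | h
    · exact hna (hza ▸ dvd_fprod_of_mem h)
    · exact hnb (hzb ▸ dvd_fprod_of_mem h)

end Aux

/-- **Lemma 4.2.2.** `φ : M_H → F(P) × F(T) × F(T)`, `φ((qx,qy)) = (q,x,y)`, is a
divisor theory: it is a homomorphism, a divisor homomorphism (divisibility in the free
monoid, i.e. the componentwise multiset order, reflects divisibility in `M_H`), and every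
basis element of `F(P) × F(T) × F(T)` is the greatest common divisor of the image of a
finite subset of `M_H`.  In particular, `M_H` is a Krull monoid: it admits a divisor
homomorphism into a free abelian monoid. -/
theorem phi_divisor_theory (M : Type) [CancelCommMonoid M]
    (hred : Reduced M) (hat : Atomic M) :
    (∀ p ∈ MHset M, ∀ q ∈ MHset M, phi (p + q) = phi p + phi q) ∧
    (∀ p ∈ MHset M, ∀ q ∈ MHset M, phi p ≤ phi q → ∃ r ∈ MHset M, p + r = q) ∧
    (∀ e, IsBasisEl e → ∃ S : Finset (Multiset (Atom M) × Multiset (Atom M)),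
      (↑S : Set _) ⊆ MHset M ∧ S.Nonempty ∧
      (∀ s ∈ S, e ≤ phi s) ∧ ∀ d, (∀ s ∈ S, d ≤ phi s) → d ≤ e) ∧
    (∃ (ι : Type) (ψ : Multiset (Atom M) × Multiset (Atom M) → ι →₀ ℕ),
      (∀ p ∈ MHset M, ∀ q ∈ MHset M, ψ (p + q) = ψ p + ψ q) ∧
      (∀ p ∈ MHset M, ∀ q ∈ MHset M, ψ p ≤ ψ q → ∃ r ∈ MHset M, p + r = q)) := by
  -- additivity (holds unconditionally)
  have hadd : ∀ p q : Multiset (Atom M) × Multiset (Atom M),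
      phi (p + q) = phi p + phi q := by
    intro p q
    simp only [phi, Prod.fst_add, Prod.snd_add, part_add, Prod.mk_add_mk]
  -- divisor homomorphism property
  have hdiv : ∀ p ∈ MHset M, ∀ q ∈ MHset M, phi p ≤ phi q →
      ∃ r ∈ MHset M, p + r = q := by
    intro p hp q hq hle
    obtain ⟨h1, h2, h3⟩ : part IsPrimeAtom p.1 ≤ part IsPrimeAtom q.1 ∧
        part (fun u => ¬ IsPrimeAtom u) p.1 ≤ part (fun u => ¬ IsPrimeAtom u) q.1 ∧
        part (fun u => ¬ IsPrimeAtom u) p.2 ≤ part (fun u => ¬ IsPrimeAtom u) q.2 := by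
      exact ⟨hle.1, hle.2.1, hle.2.2⟩
    rw [part_le_part_iff] at h1 h2 h3
    have hp1 : p.1 ≤ q.1 := le_of_counts_le
      (fun u hu => count_le_of_filter_le h1 hu)
      (fun u hu => count_le_of_filter_le h2 hu)
    have hp2 : p.2 ≤ q.2 := le_of_counts_le
      (fun u hu => by
        rw [← prime_count hred hu hp, ← prime_count hred hu hq]
        exact count_le_of_filter_le h1 hu)
      (fun u hu => count_le_of_filter_le h3 hu)
    refine ⟨(q.1 - p.1, q.2 - p.2), ?_, ?_⟩
    · have e1 : p.1 + (q.1 - p.1) = q.1 := add_tsub_cancel_of_le hp1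
      have e2 : p.2 + (q.2 - p.2) = q.2 := add_tsub_cancel_of_le hp2
      have : fprod p.1 * fprod (q.1 - p.1) = fprod p.2 * fprod (q.2 - p.2) := by
        rw [← fprod_add, ← fprod_add, e1, e2, hq]
      rw [hp] at this
      exact mul_left_cancel this
    · have e1 : p.1 + (q.1 - p.1) = q.1 := add_tsub_cancel_of_le hp1
      have e2 : p.2 + (q.2 - p.2) = q.2 := add_tsub_cancel_of_le hp2
      exact Prod.ext e1 e2
  refine ⟨fun p _ q _ => hadd p q, hdiv, ?_, ?_⟩
  · -- gcd property for basis elements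
    intro e he
    rcases he with ⟨t, rfl⟩ | ⟨t, rfl⟩ | ⟨t, rfl⟩
    · -- prime basis element
      refine ⟨{({t.1}, {t.1})}, ?_, ⟨_, Finset.mem_singleton_self _⟩, ?_, ?_⟩
      · intro s hs
        rw [Finset.coe_singleton, Set.mem_singleton_iff] at hs
        subst hs; rfl
      · intro s hs
        rw [Finset.mem_singleton] at hs
        subst hs
        simp only [phi, part_singleton_pos (pr := IsPrimeAtom) t.2,
          part_singleton_neg (pr := fun u => ¬ IsPrimeAtom u) (not_not_intro t.2)]
        exact le_rfl
      · intro d hd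
        have := hd _ (Finset.mem_singleton_self _)
        simpa only [phi, part_singleton_pos (pr := IsPrimeAtom) t.2,
          part_singleton_neg (pr := fun u => ¬ IsPrimeAtom u) (not_not_intro t.2)] using this
    · -- non-prime basis element, middle component
      have htT : ¬ IsPrimeAtom t.1 := t.2
      obtain ⟨zc, zab, hmem1, htab⟩ := exists_witness hred hat t.1 htT
      have htt : (⟨t.1, htT⟩ : {u : Atom M // ¬ IsPrimeAtom u}) = t := rfl
      have htin : t ∈ part (fun u => ¬ IsPrimeAtom u) (t.1 ::ₘ zc) := by
        rw [mem_part_iff]; exact Multiset.mem_cons_self _ _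
      have htnotin : t ∉ part (fun u => ¬ IsPrimeAtom u) zab := by
        rw [mem_part_iff]; exact htab
      refine ⟨{(t.1 ::ₘ zc, zab), ({t.1}, {t.1})}, ?_, ⟨_, Finset.mem_insert_self _ _⟩,
        ?_, ?_⟩
      · intro s hs
        simp only [Finset.coe_insert, Finset.coe_singleton, Set.mem_insert_iff,
          Set.mem_singleton_iff] at hs
        rcases hs with rfl | rfl
        · exact hmem1
        · rfl
      · intro s hs
        rw [Finset.mem_insert, Finset.mem_singleton] at hs
        rcases hs with rfl | rfl
        · exact ⟨Multiset.zero_le _, Multiset.singleton_le.2 htin, Multiset.zero_le _⟩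
        · simp only [phi, part_singleton_pos (pr := fun u => ¬ IsPrimeAtom u) htT,
            part_singleton_neg (pr := IsPrimeAtom) htT, htt]
          exact ⟨le_rfl, le_rfl, Multiset.zero_le _⟩
      · intro d hd
        have hd1 := hd _ (Finset.mem_insert_self _ _)
        have hd2 := hd _ (Finset.mem_insert_of_mem (Finset.mem_singleton_self _))
        have hd13 : d.2.2 ≤ part (fun u => ¬ IsPrimeAtom u) zab := hd1.2.2
        have hd21 : d.1 ≤ (0 : Multiset {u : Atom M // IsPrimeAtom u}) := by
          have := hd2.1
          rwa [show (phi ({t.1}, {t.1})).1 = 0 from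
            part_singleton_neg (pr := IsPrimeAtom) htT] at this
        have hd22 : d.2.1 ≤ {t} := by
          have := hd2.2.1
          rwa [show (phi ({t.1}, {t.1})).2.1 = {t} from
            part_singleton_pos (pr := fun u => ¬ IsPrimeAtom u) htT] at this
        have hd23 : d.2.2 ≤ {t} := by
          have := hd2.2.2
          rwa [show (phi ({t.1}, {t.1})).2.2 = {t} from
            part_singleton_pos (pr := fun u => ¬ IsPrimeAtom u) htT] at this
        refine ⟨hd21, hd22, ?_⟩
        rcases Multiset.le_singleton.1 hd23 with h | h
        · simp [h]
        · exact absurd (Multiset.singleton_le.1 (h ▸ hd13)) htnotin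
    · -- non-prime basis element, third component
      have htT : ¬ IsPrimeAtom t.1 := t.2
      obtain ⟨zc, zab, hmem1, htab⟩ := exists_witness hred hat t.1 htT
      have htt : (⟨t.1, htT⟩ : {u : Atom M // ¬ IsPrimeAtom u}) = t := rfl
      have htin : t ∈ part (fun u => ¬ IsPrimeAtom u) (t.1 ::ₘ zc) := by
        rw [mem_part_iff]; exact Multiset.mem_cons_self _ _
      have htnotin : t ∉ part (fun u => ¬ IsPrimeAtom u) zab := by
        rw [mem_part_iff]; exact htab
      refine ⟨{(zab, t.1 ::ₘ zc), ({t.1}, {t.1})}, ?_, ⟨_, Finset.mem_insert_self _ _⟩,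
        ?_, ?_⟩
      · intro s hs
        simp only [Finset.coe_insert, Finset.coe_singleton, Set.mem_insert_iff,
          Set.mem_singleton_iff] at hs
        rcases hs with rfl | rfl
        · exact hmem1.symm
        · rfl
      · intro s hs
        rw [Finset.mem_insert, Finset.mem_singleton] at hs
        rcases hs with rfl | rfl
        · exact ⟨Multiset.zero_le _, Multiset.zero_le _, Multiset.singleton_le.2 htin⟩
        · simp only [phi, part_singleton_pos (pr := fun u => ¬ IsPrimeAtom u) htT,
            part_singleton_neg (pr := IsPrimeAtom) htT, htt]
          exact ⟨le_rfl, Multiset.zero_le _, le_rfl⟩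
      · intro d hd
        have hd1 := hd _ (Finset.mem_insert_self _ _)
        have hd2 := hd _ (Finset.mem_insert_of_mem (Finset.mem_singleton_self _))
        have hd12 : d.2.1 ≤ part (fun u => ¬ IsPrimeAtom u) zab := hd1.2.1
        have hd21 : d.1 ≤ (0 : Multiset {u : Atom M // IsPrimeAtom u}) := by
          have := hd2.1
          rwa [show (phi ({t.1}, {t.1})).1 = 0 from
            part_singleton_neg (pr := IsPrimeAtom) htT] at this
        have hd22 : d.2.1 ≤ {t} := by
          have := hd2.2.1
          rwa [show (phi ({t.1}, {t.1})).2.1 = {t} from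
            part_singleton_pos (pr := fun u => ¬ IsPrimeAtom u) htT] at this
        have hd23 : d.2.2 ≤ {t} := by
          have := hd2.2.2
          rwa [show (phi ({t.1}, {t.1})).2.2 = {t} from
            part_singleton_pos (pr := fun u => ¬ IsPrimeAtom u) htT] at this
        refine ⟨hd21, ?_, hd23⟩
        rcases Multiset.le_singleton.1 hd22 with h | h
        · simp [h]
        · exact absurd (Multiset.singleton_le.1 (h ▸ hd12)) htnotin
  · -- Krull: divisor homomorphism into a free abelian monoid
    refine ⟨{u : Atom M // IsPrimeAtom u} ⊕ ({u : Atom M // ¬ IsPrimeAtom u} ⊕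
        {u : Atom M // ¬ IsPrimeAtom u}),
      fun p => Finsupp.sumElim (Multiset.toFinsupp (phi p).1)
        (Finsupp.sumElim (Multiset.toFinsupp (phi p).2.1)
          (Multiset.toFinsupp (phi p).2.2)), ?_, ?_⟩
    · intro p hp q hq
      ext i
      rcases i with i | i | i <;>
        simp [hadd p q, Finsupp.sumElim_apply, Multiset.toFinsupp_apply,
          Prod.fst_add, Prod.snd_add, Multiset.count_add, Finsupp.add_apply]
    · intro p hp q hq hle
      refine hdiv p hp q hq ?_
      have key := Finsupp.le_def.1 hle
      refine ⟨?_, ?_, ?_⟩ <;> rw [Multiset.le_iff_count] <;> intro a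
      · simpa [Multiset.toFinsupp_apply, Finsupp.sumElim_apply] using key (Sum.inl a)
      · simpa [Multiset.toFinsupp_apply, Finsupp.sumElim_apply] using key (Sum.inr (Sum.inl a))
      · simpa [Multiset.toFinsupp_apply, Finsupp.sumElim_apply] using key (Sum.inr (Sum.inr a))
end

section
/- Let H be an atomic monoid. Then every atom of the monoid of relations M_H is either of the form (uH^×, uH^×) for an atom u of H, or is a pair (x, y) ∈ M_H with gcd(x, y) = 1 in Z(H). -/
open Multiset
open scoped Classical ENNReal

/-- **Lemma 4.3.** Every atom of the monoid of relations `M_H` is either of the form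
`(u, u)` for an atom `u` of `H`, or is a pair of factorizations which are coprime in the
free monoid `Z(H)`. -/
theorem relAtom_structure (M : Type) [CancelCommMonoid M]
    (hred : Reduced M) (hat : Atomic M)
    (p : Multiset (Atom M) × Multiset (Atom M)) (hp : IsRelAtom p) :
    (∃ u : Atom M, p = ({u}, {u})) ∨ p.1 ∩ p.2 = 0 := by
  by_cases h : p.1 ∩ p.2 = 0
  · exact Or.inr h
  · left
    obtain ⟨u, hu⟩ := Multiset.exists_mem_of_ne_zero h
    have hu1 : u ∈ p.1 := Multiset.mem_inter.mp hu |>.1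
    have hu2 : u ∈ p.2 := Multiset.mem_inter.mp hu |>.2
    obtain ⟨x, hx⟩ := Multiset.exists_cons_of_mem hu1
    obtain ⟨y, hy⟩ := Multiset.exists_cons_of_mem hu2
    have hpM : fprod p.1 = fprod p.2 := hp.1
    have hxy : fprod x = fprod y := by
      have : u.val * fprod x = u.val * fprod y := by
        have h1 : fprod p.1 = u.val * fprod x := by
          rw [hx]; simp [fprod]
        have h2 : fprod p.2 = u.val * fprod y := by
          rw [hy]; simp [fprod]
        rw [← h1, ← h2, hpM]
      exact mul_left_cancel this
    have hsplit : p = (({u}, {u}) : Multiset (Atom M) × Multiset (Atom M)) + (x, y) := by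
      ext <;> simp [hx, hy, Multiset.singleton_add]
    rcases hp.2.2 ({u}, {u}) (x, y) rfl hxy hsplit with hq | hr
    · exact absurd hq (by simp [Prod.ext_iff])
    · refine ⟨u, ?_⟩
      have hr1 : x = 0 := congrArg Prod.fst hr
      have hr2 : y = 0 := congrArg Prod.snd hr
      have : p = (u ::ₘ x, u ::ₘ y) := by
        ext <;> simp [hx, hy]
      rw [this, hr1, hr2]
      rfl
end
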